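/- For all z ∈ ℂ \ (-∞,1], with principal branches, z^{1/2} + (z-1)^{1/2} = φ(z)^{1/2} and z^{1/2} - (z-1)^{1/2} = φ(z)^{-1/2}, where φ(z) = 2(z-1/2) + 2 z^{1/2}(z-1)^{1/2}. -/

import Mathlib

/-- The conformal map `φ(z) = 2(z - 1/2) + 2 z^{1/2}(z-1)^{1/2}` (principal branches). -/
noncomputable def phiMap (z : ℂ) : ℂ :=
  2 * (z - 1/2) + 2 * z ^ ((1:ℂ)/2) * (z - 1) ^ ((1:ℂ)/2)

/-- for `z ∈ ℂ \ (-∞,1]`, with principal branches,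
`z^{1/2} + (z-1)^{1/2} = φ(z)^{1/2}` and `z^{1/2} - (z-1)^{1/2} = φ(z)^{-1/2}`. -/
theorem sqrt_sum_eq_phi_sqrt (z : ℂ) (hz : ¬(z.im = 0 ∧ z.re ≤ 1)) :
    z ^ ((1:ℂ)/2) + (z - 1) ^ ((1:ℂ)/2) = (phiMap z) ^ ((1:ℂ)/2) ∧
    z ^ ((1:ℂ)/2) - (z - 1) ^ ((1:ℂ)/2) = (phiMap z) ^ (-((1:ℂ)/2)) := by
  push_neg at hz
  have hz0 : z ≠ 0 := by
    intro h; subst h; simp at hz; linarith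
  have hz1 : z - 1 ≠ 0 := by
    intro h
    have : z = 1 := by linear_combination h
    subst this; simp at hz
  set a := z ^ ((1:ℂ)/2) with ha
  set b := (z - 1) ^ ((1:ℂ)/2) with hb
  have haa : a * a = z := by
    rw [ha, ← Complex.cpow_add _ _ hz0]; norm_num
  have hbb : b * b = z - 1 := by
    rw [hb, ← Complex.cpow_add _ _ hz1]; norm_num
  have hare : 0 < a.re := by
    rw [ha, show (1:ℂ)/2 = (2:ℂ)⁻¹ by norm_num, Complex.cpow_inv_two_re]
    apply Real.sqrt_pos.2
    have h1 : |z.re| ≤ ‖z‖ := Complex.abs_re_le_norm z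
    rcases eq_or_ne z.im 0 with him | him
    · have hre := hz him
      have : 0 < z.re := by linarith
      nlinarith [abs_le.1 h1]
    · have h2 : |z.re| < ‖z‖ := Complex.abs_re_lt_norm.2 him
      nlinarith [abs_lt.1 h2]
  have hbre : 0 ≤ b.re := by
    rw [hb, show (1:ℂ)/2 = (2:ℂ)⁻¹ by norm_num, Complex.cpow_inv_two_re]
    exact Real.sqrt_nonneg _
  have hsre : 0 < (a + b).re := by
    rw [Complex.add_re]; linarith
  have hphi : phiMap z = (a + b) ^ (2:ℕ) := by
    simp only [phiMap, ← ha, ← hb]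
    linear_combination -haa - hbb
  have key : (phiMap z) ^ ((1:ℂ)/2) = a + b := by
    rw [hphi, show (1:ℂ)/2 = ((2:ℂ))⁻¹ by norm_num]
    exact Complex.sq_cpow_two_inv hsre
  have hsne : a + b ≠ 0 := by
    intro h
    rw [h] at hsre
    simp at hsre
  have hdiff : (a - b) * (a + b) = 1 := by
    linear_combination haa - hbb
  refine ⟨key.symm, ?_⟩
  rw [Complex.cpow_neg, key]
  exact eq_inv_of_mul_eq_one_left hdiff
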